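/- Let Π ⊊ Σ_k be a proper subshift and T : Π → Σ_k the map constructed from Π. Then for every y ∈ Π, the set of weak* limit points of the empirical measures of T(y) coincides with that of y: V(T(y), σ) = V(y, σ). -/

import Mathlib

open Filter Topology MeasureTheory

/-- Upper density of a set of naturals. -/
noncomputable def upperDensity (S : Set ℕ) : ℝ :=
  Filter.limsup (fun n => ((S ∩ Set.Iio n).ncard : ℝ) / n) Filter.atTop

/-- Lower density of a set of naturals. -/
noncomputable def lowerDensity (S : Set ℕ) : ℝ :=
  Filter.liminf (fun n => ((S ∩ Set.Iio n).ncard : ℝ) / n) Filter.atTop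

/-- Banach upper density: limsup over the interval length of the maximal
proportion of `S` in an interval of that length. -/
noncomputable def banachUpperDensity (S : Set ℕ) : ℝ :=
  Filter.limsup (fun N => ⨆ a : ℕ, ((S ∩ Set.Ico a (a + N)).ncard : ℝ) / N) Filter.atTop

/-- Banach lower density. -/
noncomputable def banachLowerDensity (S : Set ℕ) : ℝ :=
  Filter.liminf (fun N => ⨅ a : ℕ, ((S ∩ Set.Ico a (a + N)).ncard : ℝ) / N) Filter.atTop

/-- The shift map on the full shift `Σ_k = {0, …, k-1}^ℕ`. -/
def shift {k : ℕ} (x : ℕ → Fin k) : ℕ → Fin k := fun n => x (n + 1)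

/-- The metric `d(x,y) = Σ_{n ≥ 1} δ(x_n, y_n)/2^n` on `Σ_k` (sequences indexed from `0`). -/
noncomputable def shiftDist {k : ℕ} (x y : ℕ → Fin k) : ℝ :=
  ∑' n : ℕ, if x n = y n then 0 else (1 / 2) ^ (n + 1)

/-- The open ball `B_ε(x)` for the metric `shiftDist`. -/
def sball {k : ℕ} (x : ℕ → Fin k) (ε : ℝ) : Set (ℕ → Fin k) := {y | shiftDist x y < ε}

/-- `N(x, U) = {n ≥ 1 : σ^n(x) ∈ U}`. -/
def visits {k : ℕ} (x : ℕ → Fin k) (U : Set (ℕ → Fin k)) : Set ℕ :=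
  {n | 1 ≤ n ∧ shift^[n] x ∈ U}

/-- A point is recurrent if `N(x, B_ε(x)) ≠ ∅` for every `ε > 0`. -/
def Recurrent {k : ℕ} (x : ℕ → Fin k) : Prop := ∀ ε > (0 : ℝ), (visits x (sball x ε)).Nonempty

/-- A point is Banach recurrent if `N(x, B_ε(x))` has positive Banach upper density
for every `ε > 0`. -/
def BanachRecurrent {k : ℕ} (x : ℕ → Fin k) : Prop :=
  ∀ ε > (0 : ℝ), 0 < banachUpperDensity (visits x (sball x ε))

/-- Statistical ω-limit set w.r.t. a density notion `ξ`:
`ω_ξ(x) = {y : ξ(N(x, B_ε(y))) > 0 for all ε > 0}`. -/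
def statOmega {k : ℕ} (ξ : Set ℕ → ℝ) (x : ℕ → Fin k) : Set (ℕ → Fin k) :=
  {y | ∀ ε > (0 : ℝ), 0 < ξ (visits x (sball y ε))}

/-- The usual ω-limit set of `x` under the shift. -/
def omegaLim {k : ℕ} (x : ℕ → Fin k) : Set (ℕ → Fin k) :=
  {y | ∀ ε > (0 : ℝ), ∀ N : ℕ, ∃ n ≥ N, shift^[n] x ∈ sball y ε}

/-- Density of a subset of `Σ_k` w.r.t. the metric `shiftDist`. -/
def ShiftDense {k : ℕ} (A : Set (ℕ → Fin k)) : Prop :=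
  ∀ x : ℕ → Fin k, ∀ ε > (0 : ℝ), ∃ y ∈ A, shiftDist x y < ε

/-- Closure of a subset of `Σ_k` w.r.t. the metric `shiftDist`. -/
def shiftClosure {k : ℕ} (A : Set (ℕ → Fin k)) : Set (ℕ → Fin k) :=
  {z | ∀ ε > (0 : ℝ), ∃ y ∈ A, shiftDist z y < ε}

/-- `Φ^{(n)}_{xy}(t)`: the proportion of times `0 ≤ i < n` with `d(σ^i x, σ^i y) < t`. -/
noncomputable def PhiN {k : ℕ} (x y : ℕ → Fin k) (n : ℕ) (t : ℝ) : ℝ :=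
  (({i | i < n ∧ shiftDist (shift^[i] x) (shift^[i] y) < t}).ncard : ℝ) / n

/-- A pair is DC1 (distributionally chaotic of type 1) if `Φ_{xy}(s) = 0` for some `s > 0`
and `Φ*_{xy}(t) = 1` for all `t > 0`. -/
def DC1Pair {k : ℕ} (x y : ℕ → Fin k) : Prop :=
  (∃ s > (0 : ℝ), Filter.liminf (fun n => PhiN x y n s) Filter.atTop = 0) ∧
  (∀ t > (0 : ℝ), Filter.limsup (fun n => PhiN x y n t) Filter.atTop = 1)

/-- A set with at least two points is DC1-scrambled if every pair of distinct points is DC1. -/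
def DC1Scrambled {k : ℕ} (S : Set (ℕ → Fin k)) : Prop :=
  S.Nontrivial ∧ ∀ x ∈ S, ∀ y ∈ S, x ≠ y → DC1Pair x y

/-- `strictOrEq true A B` means `A ⊊ B`; `strictOrEq false A B` means `A = B`. -/
def strictOrEq {α : Type*} (b : Bool) (A B : Set α) : Prop := if b then A ⊂ B else A = B

/-- The patterns of (strict ⊊ = `true` / equality = `false`) for the three inclusions
`ω_{B_*} ⊆ ω_{d̲} ⊆ ω_{d̄} ⊆ ω_{B*}` in Cases (1)–(6). -/
def caseFlags : Fin 6 → Bool × Bool × Bool :=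
  ![(true, false, false), (true, false, true), (false, true, false),
    (true, true, false), (false, true, true), (true, true, true)]

/-- `x` satisfies Case (i), i = 1,…,6: the chain
`ω_{B_*}(x) ⊆ ω_{d̲}(x) ⊆ ω_{d̄}(x) ⊆ ω_{B*}(x) = ω_σ(x)` with strictness pattern given by
`caseFlags i`, and the last inclusion an equality. -/
def SatCase {k : ℕ} (i : Fin 6) (x : ℕ → Fin k) : Prop :=
  strictOrEq (caseFlags i).1 (statOmega banachLowerDensity x) (statOmega lowerDensity x) ∧
  strictOrEq (caseFlags i).2.1 (statOmega lowerDensity x) (statOmega upperDensity x) ∧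
  strictOrEq (caseFlags i).2.2 (statOmega upperDensity x) (statOmega banachUpperDensity x) ∧
  statOmega banachUpperDensity x = omegaLim x

/-- `x` satisfies Case (i'), i = 1,…,6: as in Case (i) but the last inclusion
`ω_{B*}(x) ⊆ ω_σ(x)` is strict. -/
def SatCase' {k : ℕ} (i : Fin 6) (x : ℕ → Fin k) : Prop :=
  strictOrEq (caseFlags i).1 (statOmega banachLowerDensity x) (statOmega lowerDensity x) ∧
  strictOrEq (caseFlags i).2.1 (statOmega lowerDensity x) (statOmega upperDensity x) ∧
  strictOrEq (caseFlags i).2.2 (statOmega upperDensity x) (statOmega banachUpperDensity x) ∧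
  statOmega banachUpperDensity x ⊂ omegaLim x
/-- A subshift: a nonempty, closed (w.r.t. the metric `shiftDist`), shift-invariant subset. -/
def IsSubshift {k : ℕ} (P : Set (ℕ → Fin k)) : Prop :=
  P.Nonempty ∧ shiftClosure P ⊆ P ∧ ∀ x ∈ P, shift x ∈ P

/-- The first `n` symbols of `y` as a finite word. -/
def prefixWord {k : ℕ} (y : ℕ → Fin k) (n : ℕ) : List (Fin k) :=
  List.ofFn (fun i : Fin n => y i)

/-- A finite word occurs in (the language of) `P` if it is the initial word of
some point of `P`. -/
def IsWordIn {k : ℕ} (w : List (Fin k)) (P : Set (ℕ → Fin k)) : Prop :=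
  ∃ x ∈ P, ∀ i : Fin w.length, x i = w.get i

/-- Data for the construction of the map `T`: an enumeration `C` of all (nonempty) finite
words of the subshift `P`, and a nonempty finite word `A1` not occurring in `P`. -/
structure TData (k : ℕ) (P : Set (ℕ → Fin k)) where
  C : ℕ → List (Fin k)
  A1 : List (Fin k)
  A1_ne : A1 ≠ []
  A1_not : ¬ IsWordIn A1 P
  C_in : ∀ n, IsWordIn (C n) P
  C_surj : ∀ w : List (Fin k), w ≠ [] → IsWordIn w P → ∃ n, C n = w

/-- The words `A_n` of the construction (indexed from `0`, so `TData.A y 0` is the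
paper's `A_1`): `A_{n+1} = A_n B_n A_n`, where `B_n = C_n Y_n ⋯ Y_n` consists of the
word `C_n` followed by `|A_n|²` copies of the initial word `Y_n` of `y` (paper's `Y_n`,
of length `n`, is `prefixWord y (n+1)` in our `0`-based indexing). -/
def TData.A {k : ℕ} {P : Set (ℕ → Fin k)} (D : TData k P) (y : ℕ → Fin k) :
    ℕ → List (Fin k)
  | 0 => D.A1
  | n + 1 =>
      D.A y n ++
        (D.C n ++ (List.replicate ((D.A y n).length ^ 2) (prefixWord y (n + 1))).flatten) ++
        D.A y n

/-- The requirement `|C_n| = o(|A_n|)` as `n → ∞`. -/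
def TData.Small {k : ℕ} {P : Set (ℕ → Fin k)} (D : TData k P) : Prop :=
  ∀ y : ℕ → Fin k,
    Filter.Tendsto (fun n => ((D.C n).length : ℝ) / ((D.A y n).length))
      Filter.atTop (nhds 0)

/-- The map `T`: `T(y) = lim_n A_n` is the sequence whose `i`-th symbol is the `i`-th
symbol of `A_n` for every large `n` (the words `A_n` are nested prefixes of each other,
and `|A_{i+1}| > i`, so the `i`-th symbol of `A_{i+1}` is well defined). -/
def TData.T {k : ℕ} {P : Set (ℕ → Fin k)} (D : TData k P) (y : ℕ → Fin k) : ℕ → Fin k :=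
  fun i => if h : i < (D.A y (i + 1)).length then (D.A y (i + 1)).get ⟨i, h⟩ else y i
/-- The support of a measure on `Σ_k` w.r.t. the metric `shiftDist`. -/
def msupp {k : ℕ} (μ : MeasureTheory.Measure (ℕ → Fin k)) : Set (ℕ → Fin k) :=
  {z | ∀ ε > (0 : ℝ), 0 < μ (sball z ε)}

/-- The set `M(Λ, σ)` of shift-invariant Borel probability measures giving full
measure to `Λ`. -/
def invMeasures {k : ℕ} (Λ : Set (ℕ → Fin k)) : Set (MeasureTheory.Measure (ℕ → Fin k)) :=
  {μ | MeasureTheory.IsProbabilityMeasure μ ∧ μ.map shift = μ ∧ μ Λ = 1}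

/-- `V(x, σ)`: the set of weak* limit points of the sequence of empirical measures
`(1/n) Σ_{i<n} δ_{σ^i x}` of `x`, i.e. probability measures `μ` such that along some
subsequence the Birkhoff averages of every continuous function converge to `∫ g dμ`. -/
def VSet {k : ℕ} (x : ℕ → Fin k) : Set (MeasureTheory.Measure (ℕ → Fin k)) :=
  {μ | MeasureTheory.IsProbabilityMeasure μ ∧ ∃ φ : ℕ → ℕ, StrictMono φ ∧
    ∀ g : C(ℕ → Fin k, ℝ),
      Filter.Tendsto (fun j => (∑ i ∈ Finset.range (φ j), g (shift^[i] x)) / (φ j : ℝ))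
        Filter.atTop (nhds (∫ z, g z ∂μ))}


namespace TPE

lemma shift_iter {k : ℕ} (x : ℕ → Fin k) (i t : ℕ) : shift^[i] x t = x (t + i) := by
  induction i generalizing x t with
  | zero => rfl
  | succ i ih =>
    rw [Function.iterate_succ_apply, ih]
    simp [shift, Nat.add_assoc]

lemma flatRep_len {α : Type*} (m : ℕ) (w : List α) :
    (List.replicate m w).flatten.length = m * w.length := by
  induction m with
  | zero => simp
  | succ m ih => simp [List.replicate_succ, ih, Nat.succ_mul, Nat.add_comm]

lemma flatRep_get {α : Type*} (m : ℕ) (w : List α) (hw : 0 < w.length) (i : ℕ)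
    (h : i < ((List.replicate m w).flatten).length) :
    (List.replicate m w).flatten[i] = w[i % w.length]'(Nat.mod_lt _ hw) := by
  induction m generalizing i with
  | zero => simp at h
  | succ m ih =>
    have he : (List.replicate (m+1) w).flatten = w ++ (List.replicate m w).flatten := by
      rw [List.replicate_succ, List.flatten_cons]
    have h' : i < (w ++ (List.replicate m w).flatten).length := he ▸ h
    rw [List.getElem_of_eq he h]
    by_cases hi : i < w.length
    · rw [List.getElem_append_left hi]
      congr 1
      exact (Nat.mod_eq_of_lt hi).symm
    · push_neg at hi
      rw [List.getElem_append_right hi, ih]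
      congr 1
      conv_rhs => rw [show i = i - w.length + w.length from (Nat.sub_add_cancel hi).symm]
      rw [Nat.add_mod_right]

variable {k : ℕ} {P : Set (ℕ → Fin k)} (D : TData k P) (y : ℕ → Fin k)

/-- `a n = |A_n|` -/
noncomputable def aa (n : ℕ) : ℕ := (D.A y n).length
/-- `c n = |C_n|` -/
noncomputable def cc (n : ℕ) : ℕ := (D.C n).length

lemma lenA (n : ℕ) :
    aa D y (n+1) = aa D y n + (cc D n + aa D y n ^ 2 * (n+1)) + aa D y n := by
  show (D.A y n ++ _ ++ D.A y n).length = _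
  rw [List.length_append, List.length_append, List.length_append, flatRep_len]
  simp [aa, cc, prefixWord]

lemma aa_ge (n : ℕ) : n + 1 ≤ aa D y n := by
  induction n with
  | zero =>
    have : D.A1 ≠ [] := D.A1_ne
    have : 0 < (D.A1).length := List.length_pos_iff.2 this
    simpa [aa, TData.A] using Nat.succ_le_of_lt this
  | succ n ih =>
    rw [lenA]
    nlinarith

lemma aa_pos (n : ℕ) : 0 < aa D y n := lt_of_lt_of_le (Nat.succ_pos n) (aa_ge D y n)

lemma aa_lt (n : ℕ) : aa D y n < aa D y (n+1) := by
  have := aa_pos D y n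
  rw [lenA]; nlinarith

lemma aa_mono : StrictMono (aa D y) := strictMono_nat_of_lt_succ (aa_lt D y)

lemma A_prefix (n : ℕ) : D.A y n <+: D.A y (n+1) := by
  show D.A y n <+: D.A y n ++ _ ++ D.A y n
  rw [List.append_assoc]
  exact List.prefix_append _ _

lemma A_prefix_le {n m : ℕ} (h : n ≤ m) : D.A y n <+: D.A y m := by
  induction m with
  | zero => simp_all
  | succ m ih =>
    rcases Nat.lt_or_ge n (m+1) with h' | h'
    · exact (ih (Nat.lt_succ_iff.1 h')).trans (A_prefix D y m)
    · have : n = m + 1 := le_antisymm h h'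
      subst this; exact List.prefix_rfl

lemma Ty_eq {n i : ℕ} (h : i < aa D y n) :
    D.T y i = (D.A y n)[i]'(h) := by
  have hi1 : i < (D.A y (i+1)).length :=
    lt_of_lt_of_le (Nat.lt_succ_of_lt (Nat.lt_succ_self i)) (aa_ge D y (i+1))
  show (if h' : i < (D.A y (i + 1)).length then (D.A y (i + 1)).get ⟨i, h'⟩ else y i) = _
  rw [dif_pos hi1]
  show (D.A y (i+1))[i] = _
  rcases Nat.le_total n (i+1) with hn | hn
  · exact (List.IsPrefix.getElem (A_prefix_le D y hn) h).symm
  · exact List.IsPrefix.getElem (A_prefix_le D y hn) hi1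

lemma blockSym (m i' : ℕ) (h : i' < aa D y m ^ 2 * (m+1)) :
    D.T y (aa D y m + cc D m + i') = y (i' % (m+1)) := by
  have hlt : aa D y m + cc D m + i' < aa D y (m+1) := by
    rw [lenA]; omega
  rw [Ty_eq D y hlt]
  show (D.A y m ++ (D.C m ++ (List.replicate ((D.A y m).length ^ 2) (prefixWord y (m + 1))).flatten) ++ D.A y m)[_] = _
  have hw : (prefixWord y (m+1)).length = m + 1 := by simp [prefixWord]
  have hflen : ((List.replicate ((D.A y m).length ^ 2) (prefixWord y (m + 1))).flatten).length
      = aa D y m ^ 2 * (m+1) := by rw [flatRep_len, hw]; rfl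
  have h1 : aa D y m + cc D m + i' <
      (D.A y m ++ (D.C m ++ (List.replicate ((D.A y m).length ^ 2) (prefixWord y (m + 1))).flatten)).length := by
    rw [List.length_append, List.length_append, hflen]
    show _ < aa D y m + (cc D m + _)
    omega
  refine (List.getElem_append_left (bs := D.A y m) h1).trans ?_
  have h2 : (D.A y m).length ≤ aa D y m + cc D m + i' := by
    show aa D y m ≤ _; omega
  rw [List.getElem_append_right h2]
  have h3 : (D.C m).length ≤ aa D y m + cc D m + i' - (D.A y m).length := by
    show cc D m ≤ aa D y m + cc D m + i' - aa D y m; omega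
  rw [List.getElem_append_right h3]
  have h4 : aa D y m + cc D m + i' - (D.A y m).length - (D.C m).length = i' := by
    show aa D y m + cc D m + i' - aa D y m - cc D m = i'; omega
  have hwpos : 0 < (prefixWord y (m+1)).length := by rw [hw]; omega
  simp only [h4]
  rw [flatRep_get _ _ hwpos]
  have hptw : ∀ j, (hj : j < (prefixWord y (m+1)).length) → (prefixWord y (m+1))[j] = y j := by
    intro j hj
    simp only [prefixWord, List.getElem_ofFn]
  rw [hptw _ _, hw]

lemma copySum (g : C(ℕ → Fin k, ℝ)) (G : ℝ) (hG0 : 0 ≤ G)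
    (L : ℕ) (ε' : ℝ) (hε' : 0 ≤ ε')
    (hL : ∀ x x' : ℕ → Fin k, (∀ t ≤ L, x t = x' t) → |g x - g x'| ≤ ε')
    (hGb : ∀ x : ℕ → Fin k, |g x| ≤ G)
    (m q : ℕ) (hq : q ≤ aa D y m ^ 2) :
    |∑ i' ∈ Finset.range (q * (m+1)), g (shift^[aa D y m + cc D m + i'] (D.T y))
      - q * ∑ j ∈ Finset.range (m+1), g (shift^[j] y)|
      ≤ q * ((m+1) * ε' + 2*G*(L+1)) := by
  induction q with
  | zero => simp
  | succ q ih =>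
    have hq' : q ≤ aa D y m ^ 2 := Nat.le_of_succ_le hq
    have key : ∀ j ∈ Finset.range (m + 1),
        |g (shift^[aa D y m + cc D m + (q * (m+1) + j)] (D.T y)) - g (shift^[j] y)|
          ≤ ε' + (if j + L ≤ m then 0 else 2*G) := by
      intro j hj
      rw [Finset.mem_range] at hj
      by_cases hgood : j + L ≤ m
      · rw [if_pos hgood]
        have hagree : ∀ t ≤ L,
            shift^[aa D y m + cc D m + (q * (m+1) + j)] (D.T y) t = shift^[j] y t := by
          intro t ht
          rw [shift_iter, shift_iter]
          have hidx : t + (aa D y m + cc D m + (q * (m+1) + j))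
              = aa D y m + cc D m + (q * (m+1) + (j + t)) := by ring
          rw [hidx]
          have hblt : q * (m+1) + (j + t) < aa D y m ^ 2 * (m+1) := by
            have h1 : j + t < m + 1 := by omega
            have h2 : q + 1 ≤ aa D y m ^ 2 := hq
            calc q * (m+1) + (j + t) < q * (m+1) + (m+1) := by omega
              _ = (q+1) * (m+1) := by ring
              _ ≤ aa D y m ^ 2 * (m+1) := Nat.mul_le_mul_right _ h2
          rw [blockSym D y m _ hblt]
          have hmod : (q * (m+1) + (j + t)) % (m+1) = j + t := by
            rw [Nat.add_comm, Nat.add_mul_mod_self_right, Nat.mod_eq_of_lt (by omega)]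
          rw [hmod]
          congr 1
          omega
        have := hL _ _ hagree
        linarith
      · rw [if_neg hgood]
        have h1 := hGb (shift^[aa D y m + cc D m + (q * (m+1) + j)] (D.T y))
        have h2 := hGb (shift^[j] y)
        have := abs_sub (g (shift^[aa D y m + cc D m + (q * (m+1) + j)] (D.T y))) (g (shift^[j] y))
        calc |g (shift^[aa D y m + cc D m + (q * (m+1) + j)] (D.T y)) - g (shift^[j] y)|
            ≤ |g (shift^[aa D y m + cc D m + (q * (m+1) + j)] (D.T y))| + |g (shift^[j] y)| :=
              abs_sub _ _
          _ ≤ ε' + 2*G := by linarith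
    have hchunk : |∑ j ∈ Finset.range (m+1),
          g (shift^[aa D y m + cc D m + (q * (m+1) + j)] (D.T y))
        - ∑ j ∈ Finset.range (m+1), g (shift^[j] y)|
        ≤ (m+1) * ε' + 2*G*(L+1) := by
      rw [← Finset.sum_sub_distrib]
      calc |∑ j ∈ Finset.range (m+1),
            (g (shift^[aa D y m + cc D m + (q * (m+1) + j)] (D.T y)) - g (shift^[j] y))|
          ≤ ∑ j ∈ Finset.range (m+1),
            |g (shift^[aa D y m + cc D m + (q * (m+1) + j)] (D.T y)) - g (shift^[j] y)| :=
            Finset.abs_sum_le_sum_abs _ _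
        _ ≤ ∑ j ∈ Finset.range (m+1), (ε' + (if j + L ≤ m then 0 else 2*G)) :=
            Finset.sum_le_sum key
        _ = (m+1) * ε' + ∑ j ∈ Finset.range (m+1), (if j + L ≤ m then (0:ℝ) else 2*G) := by
            rw [Finset.sum_add_distrib, Finset.sum_const, Finset.card_range, nsmul_eq_mul]
            push_cast; ring
        _ ≤ (m+1) * ε' + 2*G*(L+1) := by
            have hsub : (Finset.range (m+1)).filter (fun j => j + L ≤ m) =
                (Finset.range (m+1)).filter (fun j => j + L ≤ m) := rfl
            have hite : ∑ j ∈ Finset.range (m+1), (if j + L ≤ m then (0:ℝ) else 2*G)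
                ≤ 2*G*(L+1) := by
              rw [Finset.sum_ite, Finset.sum_const_zero, zero_add, Finset.sum_const,
                nsmul_eq_mul]
              have hsub2 : (Finset.range (m+1)).filter (fun j => ¬ (j + L ≤ m))
                  ⊆ Finset.Ico (m - L) (m+1) := by
                intro j hj
                simp only [Finset.mem_filter, Finset.mem_range, Finset.mem_Ico] at hj ⊢
                omega
              have hcard : (((Finset.range (m+1)).filter (fun j => ¬ (j + L ≤ m))).card : ℝ)
                  ≤ (L : ℝ) + 1 := by
                have h1 := Finset.card_le_card hsub2
                rw [Nat.card_Ico] at h1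
                have h2 : ((Finset.range (m+1)).filter (fun j => ¬ (j + L ≤ m))).card ≤ L + 1 := by
                  omega
                exact_mod_cast h2
              calc (((Finset.range (m+1)).filter (fun j => ¬ (j + L ≤ m))).card : ℝ) * (2*G)
                  ≤ ((L:ℝ)+1) * (2*G) := by
                    apply mul_le_mul_of_nonneg_right hcard; linarith
                _ = 2*G*(L+1) := by ring
            linarith
    rw [Nat.succ_mul, Finset.sum_range_add]
    push_cast
    have habs : |(∑ i' ∈ Finset.range (q * (m+1)),
          g (shift^[aa D y m + cc D m + i'] (D.T y))
        + ∑ j ∈ Finset.range (m+1),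
          g (shift^[aa D y m + cc D m + (q * (m+1) + j)] (D.T y)))
        - ((q:ℝ)+1) * ∑ j ∈ Finset.range (m+1), g (shift^[j] y)|
        ≤ |∑ i' ∈ Finset.range (q * (m+1)), g (shift^[aa D y m + cc D m + i'] (D.T y))
            - (q:ℝ) * ∑ j ∈ Finset.range (m+1), g (shift^[j] y)|
          + |∑ j ∈ Finset.range (m+1),
              g (shift^[aa D y m + cc D m + (q * (m+1) + j)] (D.T y))
            - ∑ j ∈ Finset.range (m+1), g (shift^[j] y)| := by
      have := abs_add_le (∑ i' ∈ Finset.range (q * (m+1)),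
          g (shift^[aa D y m + cc D m + i'] (D.T y))
        - (q:ℝ) * ∑ j ∈ Finset.range (m+1), g (shift^[j] y))
        (∑ j ∈ Finset.range (m+1),
          g (shift^[aa D y m + cc D m + (q * (m+1) + j)] (D.T y))
        - ∑ j ∈ Finset.range (m+1), g (shift^[j] y))
      calc _ = |(∑ i' ∈ Finset.range (q * (m+1)),
            g (shift^[aa D y m + cc D m + i'] (D.T y))
          - (q:ℝ) * ∑ j ∈ Finset.range (m+1), g (shift^[j] y))
          + (∑ j ∈ Finset.range (m+1),
            g (shift^[aa D y m + cc D m + (q * (m+1) + j)] (D.T y))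
          - ∑ j ∈ Finset.range (m+1), g (shift^[j] y))| := by congr 1; ring
        _ ≤ _ := this
    have hih := ih hq'
    calc _ ≤ _ := habs
      _ ≤ (q:ℝ) * ((m+1) * ε' + 2*G*(L+1)) + ((m+1) * ε' + 2*G*(L+1)) := by
          linarith
      _ = ((q:ℝ)+1) * ((m+1) * ε' + 2*G*(L+1)) := by ring

end TPE

namespace TPE2
open TPE

lemma cyl_open {k : ℕ} (x0 : ℕ → Fin k) (L : ℕ) :
    IsOpen {z : ℕ → Fin k | ∀ t < L, z t = x0 t} := by
  have he : {z : ℕ → Fin k | ∀ t < L, z t = x0 t}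
      = ⋂ t ∈ Finset.range L, (fun z : ℕ → Fin k => z t) ⁻¹' {x0 t} := by
    ext z; simp
  rw [he]
  exact isOpen_biInter_finset fun t _ =>
    (continuous_apply t).isOpen_preimage _ (isOpen_discrete _)

lemma exists_modulus {k : ℕ} (g : C(ℕ → Fin k, ℝ)) {ε : ℝ} (hε : 0 < ε) :
    ∃ L : ℕ, ∀ x x' : ℕ → Fin k, (∀ t ≤ L, x t = x' t) → |g x - g x'| ≤ ε := by
  -- local modulus at each point
  have hloc : ∀ x : ℕ → Fin k, ∃ L : ℕ, ∀ z : ℕ → Fin k,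
      (∀ t < L, z t = x t) → |g z - g x| < ε / 2 := by
    intro x
    have hc : ContinuousAt g x := g.continuous.continuousAt
    have hmem : g ⁻¹' Metric.ball (g x) (ε / 2) ∈ nhds x :=
      hc (Metric.ball_mem_nhds _ (by linarith))
    rw [nhds_pi] at hmem
    rw [Filter.mem_pi] at hmem
    obtain ⟨I, hIfin, t, ht, hsub⟩ := hmem
    obtain ⟨L, hL⟩ := hIfin.bddAbove
    refine ⟨L + 1, fun z hz => ?_⟩
    have hzmem : z ∈ I.pi t := by
      intro i hi
      have : i ≤ L := hL hi
      rw [hz i (by omega)]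
      have := ht i
      rw [nhds_discrete, Filter.mem_pure] at this
      exact this
    have := hsub hzmem
    simpa [Real.dist_eq, abs_sub_comm] using this
  choose L hL using hloc
  -- compactness
  have hcov : (Set.univ : Set (ℕ → Fin k)) ⊆
      ⋃ x : ℕ → Fin k, {z | ∀ t < L x, z t = x t} := by
    intro x _
    exact Set.mem_iUnion.2 ⟨x, fun t _ => rfl⟩
  obtain ⟨s, hs⟩ := isCompact_univ.elim_finite_subcover _ (fun x => cyl_open x (L x)) hcov
  refine ⟨s.sup L, fun x x' hxx' => ?_⟩
  obtain ⟨x0, hx0s, hx0⟩ : ∃ x0 ∈ s, ∀ t < L x0, x t = x0 t := by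
    have := hs (Set.mem_univ x)
    simpa using this
  have hx' : ∀ t < L x0, x' t = x0 t := by
    intro t ht
    rw [← hxx' t (le_trans (Nat.le_of_lt_succ (Nat.lt_succ_of_lt ht)) (Finset.le_sup hx0s))]
    exact hx0 t ht
  have h1 := hL x0 x hx0
  have h2 := hL x0 x' hx'
  have h3 : |g x - g x'| ≤ |g x - g x0| + |g x' - g x0| := by
    have := abs_sub_le (g x) (g x0) (g x')
    have := abs_sub_comm (g x0) (g x')
    linarith [abs_sub_le (g x) (g x0) (g x'), abs_sub_comm (g x0) (g x')]
  linarith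

end TPE2

namespace TPE3
open TPE TPE2

lemma ev_div (C ε : ℝ) (hε : 0 < ε) : ∀ᶠ m : ℕ in atTop, C / ((m:ℝ)+1) ≤ ε := by
  have h := tendsto_one_div_add_atTop_nhds_zero_nat.const_mul C
  rw [mul_zero] at h
  filter_upwards [h.eventually_lt_const hε] with m hm
  have : C / ((m:ℝ)+1) = C * (1/((m:ℝ)+1)) := by ring
  rw [this]
  exact le_of_lt hm

set_option maxHeartbeats 2000000 in
lemma mainEst {k : ℕ} {P : Set (ℕ → Fin k)} (D : TData k P) (y : ℕ → Fin k)
    (hD' : Filter.Tendsto (fun n => ((D.C n).length : ℝ) / ((D.A y n).length))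
      Filter.atTop (nhds 0))
    (g : C(ℕ → Fin k, ℝ)) {ε : ℝ} (hε : 0 < ε) :
    ∀ᶠ n in atTop, ∀ N : ℕ, aa D y n < N → N ≤ aa D y (n+1) →
      |(∑ i ∈ Finset.range N, g (shift^[i] (D.T y))) / (N:ℝ)
        - (∑ i ∈ Finset.range (n+1), g (shift^[i] y)) / ((n:ℝ)+1)| ≤ ε := by
  classical
  set G : ℝ := ‖g‖ + 1 with hGdef
  have hG1 : 1 ≤ G := by rw [hGdef]; linarith [norm_nonneg g]
  have hG0 : 0 ≤ G := by linarith
  have hGpos : 0 < G := by linarith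
  have hGb : ∀ x : ℕ → Fin k, |g x| ≤ G := fun x => by
    have := g.norm_coe_le_norm x
    rw [Real.norm_eq_abs] at this
    linarith
  set ε' : ℝ := ε/4 with hε'def
  have hε'0 : (0:ℝ) ≤ ε' := by positivity
  obtain ⟨L, hL⟩ := exists_modulus g (show (0:ℝ) < ε' by positivity)
  -- eventual facts over m
  have evδ : ∀ᶠ m : ℕ in atTop,
      ((D.C m).length : ℝ) / ((D.A y m).length) ≤ ε/(32*G) :=
    (hD'.eventually_lt_const (show (0:ℝ) < ε/(32*G) by positivity)).mono
      fun m hm => le_of_lt hm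
  have ev3 : ∀ᶠ m : ℕ in atTop, 4*G*((L:ℝ)+1) / ((m:ℝ)+1) ≤ ε/8 :=
    ev_div _ _ (by positivity)
  have ev4 : ∀ᶠ m : ℕ in atTop, 2*G / ((m:ℝ)+1) ≤ ε/16 :=
    ev_div _ _ (by positivity)
  have ev5 : ∀ᶠ m : ℕ in atTop, 8*G / ((m:ℝ)+1) ≤ ε/8 :=
    ev_div _ _ (by positivity)
  -- main estimate over m (for n = m+1)
  have main : ∀ᶠ m : ℕ in atTop, ∀ N : ℕ,
      aa D y (m+1) < N → N ≤ aa D y (m+2) →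
      |(∑ i ∈ Finset.range N, g (shift^[i] (D.T y))) / (N:ℝ)
        - (∑ i ∈ Finset.range (m+2), g (shift^[i] y)) / ((m:ℝ)+2)| ≤ ε := by
    filter_upwards [evδ, (tendsto_add_atTop_nat 1).eventually evδ, ev3, ev4, ev5]
      with m hδm hδm1 h3 h4 h5
    intro N hN1 hN2
    -- notation
    have hδm' : ((cc D m : ℝ)) / (aa D y m) ≤ ε/(32*G) := hδm
    have hδm1' : ((cc D (m+1) : ℝ)) / (aa D y (m+1)) ≤ ε/(32*G) := hδm1
    set am := aa D y m with ham_def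
    set an := aa D y (m+1) with han_def
    set cm := cc D m with hcm_def
    set cn := cc D (m+1) with hcn_def
    have hlen1 : an = am + (cm + am^2*(m+1)) + am := lenA D y m
    have hlen2 : aa D y (m+2) = an + (cn + an^2*(m+2)) + an := lenA D y (m+1)
    have ham1 : m+1 ≤ am := aa_ge D y m
    have han1 : m+2 ≤ an := aa_ge D y (m+1)
    have hamsq : am^2 = am*am := pow_two am
    have hansq : an^2 = an*an := pow_two an
    have ham2 : am * (m+1) ≤ an := by
      have h5 : am ≤ am^2 := by
        rw [hamsq]; exact Nat.le_mul_of_pos_left _ (by omega)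
      have h6 : am * (m+1) ≤ am^2 * (m+1) := Nat.mul_le_mul_right _ h5
      omega
    set s' := am + cm with hs'def
    set w1 := am^2 * (m+1) with hw1def
    set s := an + cn with hsdef
    set t := N - min N s with htdef
    set q := min (t / (m+2)) (an^2) with hqdef
    set w2 := q * (m+2) with hw2def
    have hw2t : w2 ≤ t := by
      calc q * (m+2) ≤ (t/(m+2)) * (m+2) := Nat.mul_le_mul_right _ (min_le_left _ _)
        _ ≤ t := Nat.div_mul_le_self _ _
    have hs'w1 : s' + w1 + am = an := by omega
    have hw2N : (s + w2 ≤ N) ∨ w2 = 0 := by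
      rcases le_or_gt N s with h | h
      · right
        have h0 : min N s = N := min_eq_left h
        have ht0 : t = 0 := by omega
        have : q = 0 := by
          rw [hqdef, ht0]
          simp
        rw [hw2def, this]; ring
      · left
        have h0 : min N s = s := min_eq_right h.le
        have : t = N - s := by omega
        omega
    -- finsets
    set F1 := Finset.Ico s' (s' + w1) with hF1def
    set F2 := Finset.Ico s (s + w2) with hF2def
    have hsub1 : F1 ⊆ Finset.range N := by
      intro i hi
      rw [hF1def, Finset.mem_Ico] at hi
      rw [Finset.mem_range]
      omega
    have hsub2 : F2 ⊆ Finset.range N := by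
      intro i hi
      rw [hF2def, Finset.mem_Ico] at hi
      rw [Finset.mem_range]
      rcases hw2N with h | h <;> omega
    have hdisj : Disjoint F1 F2 := by
      rw [Finset.disjoint_left]
      intro i hi hi2
      rw [hF1def, Finset.mem_Ico] at hi
      rw [hF2def, Finset.mem_Ico] at hi2
      omega
    have hsubU : F1 ∪ F2 ⊆ Finset.range N := Finset.union_subset hsub1 hsub2
    have hw12N : w1 + w2 ≤ N := by
      have h1 := Finset.card_le_card hsubU
      rw [Finset.card_union_of_disjoint hdisj, Finset.card_range, Nat.card_Ico,
        Nat.card_Ico] at h1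
      omega
    -- sums
    set f : ℕ → ℝ := fun i => g (shift^[i] (D.T y)) with hfdef
    set ST := ∑ i ∈ Finset.range N, f i with hSTdef
    set T1 := ∑ i ∈ F1, f i with hT1def
    set T2 := ∑ i ∈ F2, f i with hT2def
    set R := ∑ i ∈ Finset.range N \ (F1 ∪ F2), f i with hRdef
    have hsplit : ST = R + (T1 + T2) := by
      rw [hSTdef, hRdef, hT1def, hT2def, ← Finset.sum_union hdisj,
        Finset.sum_sdiff hsubU]
    have hcards : (Finset.range N \ (F1 ∪ F2)).card = N - (w1 + w2) := by
      rw [Finset.card_sdiff_of_subset hsubU, Finset.card_union_of_disjoint hdisj,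
        Finset.card_range, Nat.card_Ico, Nat.card_Ico]
      omega
    have hRb : |R| ≤ ((N:ℝ) - w1 - w2) * G := by
      have h1 : |R| ≤ ((N - (w1+w2) : ℕ) : ℝ) * G := by
        rw [hRdef]
        calc |∑ i ∈ Finset.range N \ (F1 ∪ F2), f i|
            ≤ ∑ i ∈ Finset.range N \ (F1 ∪ F2), |f i| := Finset.abs_sum_le_sum_abs _ _
          _ ≤ (Finset.range N \ (F1 ∪ F2)).card • G :=
              Finset.sum_le_card_nsmul _ _ _ (fun i _ => hGb _)
          _ = ((N - (w1+w2) : ℕ) : ℝ) * G := by rw [hcards, nsmul_eq_mul]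
      have h2 : ((N - (w1+w2) : ℕ) : ℝ) = (N:ℝ) - w1 - w2 := by
        rw [Nat.cast_sub hw12N]; push_cast; ring
      rw [h2] at h1; exact h1
    -- reindex + copySum
    set Sy1 := ∑ i ∈ Finset.range (m+1), g (shift^[i] y) with hSy1def
    set Sy2 := ∑ i ∈ Finset.range (m+2), g (shift^[i] y) with hSy2def
    have hT1r : T1 = ∑ i' ∈ Finset.range w1, g (shift^[am + cm + i'] (D.T y)) := by
      rw [hT1def, hF1def, Finset.sum_Ico_eq_sum_range,
        show s' + w1 - s' = w1 from by omega]
    have hT2r : T2 = ∑ i' ∈ Finset.range w2, g (shift^[an + cn + i'] (D.T y)) := by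
      rw [hT2def, hF2def, Finset.sum_Ico_eq_sum_range,
        show s + w2 - s = w2 from by omega]
    have hcs1 : |T1 - ((am:ℝ)^2) * Sy1| ≤ ((am:ℝ)^2)*(((m:ℝ)+1)*ε' + 2*G*((L:ℝ)+1)) := by
      have h := copySum D y g G hG0 L ε' hε'0 hL hGb m (am^2) le_rfl
      rw [hT1r]
      have hc : ((am^2 : ℕ) : ℝ) = (am:ℝ)^2 := by push_cast; ring
      rw [hc] at h
      exact h
    have hq2 : q ≤ an ^ 2 := min_le_right _ _
    have hcs2 : |T2 - (q:ℝ) * Sy2| ≤ (q:ℝ)*(((m:ℝ)+2)*ε' + 2*G*((L:ℝ)+1)) := by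
      have h := copySum D y g G hG0 L ε' hε'0 hL hGb (m+1) q hq2
      rw [hT2r]
      have : ((m:ℝ)+1+1) = (m:ℝ)+2 := by ring
      rw [show (m+1)+1 = m+2 from rfl] at h
      push_cast at h ⊢
      convert h using 3 <;> ring
    -- positivity facts
    have hNpos : (0:ℝ) < N := by
      have : 0 < N := by omega
      exact_mod_cast this
    have hm1 : (0:ℝ) < (m:ℝ)+1 := by positivity
    have hm2 : (0:ℝ) < (m:ℝ)+2 := by positivity
    have hampos : (0:ℝ) < am := by
      have : 0 < am := by omega
      exact_mod_cast this
    have hanpos : (0:ℝ) < an := by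
      have : 0 < an := by omega
      exact_mod_cast this
    have hanN : (an:ℝ) < N := by exact_mod_cast hN1
    have hamN : (am:ℝ) ≤ (N:ℝ) := by
      have : am ≤ N := by omega
      exact_mod_cast this
    have hamanR : (am:ℝ) * ((m:ℝ)+1) ≤ an := by exact_mod_cast ham2
    have ham1R : (m:ℝ)+1 ≤ am := by exact_mod_cast ham1
    have han1R : (m:ℝ)+2 ≤ an := by exact_mod_cast han1
    have hw1N : (w1:ℝ) ≤ N ∧ (0:ℝ) ≤ (w2:ℝ) ∧ (w1:ℝ) + w2 ≤ N := by
      refine ⟨?_, ?_, ?_⟩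
      · have : w1 ≤ N := by omega
        exact_mod_cast this
      · positivity
      · exact_mod_cast hw12N
    have hw1cast : (w1:ℝ) = (am:ℝ)^2 * ((m:ℝ)+1) := by rw [hw1def]; push_cast; ring
    have hw2cast : (w2:ℝ) = (q:ℝ) * ((m:ℝ)+2) := by rw [hw2def]; push_cast; ring
    -- the Jr bound
    set Jr : ℝ := (N:ℝ) - w1 - w2 with hJrdef
    have hJr0 : 0 ≤ Jr := by
      rw [hJrdef]
      linarith only [hw1N.2.2, Nat.cast_nonneg (α := ℝ) w1, Nat.cast_nonneg (α := ℝ) w2]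
    set QQ : ℝ := 4/((m:ℝ)+1) + (cm:ℝ)/am + (cn:ℝ)/an with hQQdef
    have hcmval : (cm:ℝ) = ((cm:ℝ)/am) * am := by field_simp
    have hcnval : (cn:ℝ) = ((cn:ℝ)/an) * an := by field_simp
    have hδnn : 0 ≤ (cm:ℝ)/am ∧ 0 ≤ (cn:ℝ)/an := ⟨by positivity, by positivity⟩
    have hcase : (N ≤ w1 + w2 + (2*am + cm + cn + (m+2)))
        ∨ (N ≤ w1 + w2 + (2*am + cm + cn + an) ∧ an*an ≤ N) := by
      rcases le_or_gt N s with h | h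
      · left
        have h0 : min N s = N := min_eq_left h
        have ht0 : t = 0 := by omega
        have hq0 : q = 0 := by rw [hqdef, ht0]; simp
        have hw20 : w2 = 0 := by rw [hw2def, hq0]; ring
        omega
      · have h0 : min N s = s := min_eq_right h.le
        have htv : t = N - s := by omega
        have hmod := Nat.div_add_mod t (m+2)
        have hmodlt : t % (m+2) < m+2 := Nat.mod_lt _ (by omega)
        rcases le_or_gt (t / (m+2)) (an^2) with hc | hc
        · left
          have hqv : q = t / (m+2) := min_eq_left hc
          have : w2 = (m+2) * (t/(m+2)) := by rw [hw2def, hqv]; ring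
          omega
        · right
          have hqv : q = an^2 := min_eq_right hc.le
          have hw2v : w2 = an^2 * (m+2) := by rw [hw2def, hqv]
          constructor
          · omega
          · have h1 : an^2 + 1 ≤ t / (m+2) := hc
            have h2 : (an^2 + 1) * (m+2) ≤ t := (Nat.le_div_iff_mul_le (by omega)).1 h1
            have h3 : an^2 * (m+2) ≤ (an^2+1) * (m+2) := Nat.mul_le_mul_right _ (by omega)
            have h4 : an^2 ≤ an^2 * (m+2) := Nat.le_mul_of_pos_right _ (by omega)
            omega
    have hJrQ : Jr ≤ QQ * N := by
      have p2 : (cm:ℝ) ≤ ((cm:ℝ)/am) * N := by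
        have he : (cm:ℝ)/(am:ℝ)*(am:ℝ) = (cm:ℝ) := div_mul_cancel₀ _ (ne_of_gt hampos)
        calc (cm:ℝ) = ((cm:ℝ)/am)*am := he.symm
          _ ≤ ((cm:ℝ)/am)*N := mul_le_mul_of_nonneg_left hamN hδnn.1
      have p3 : (cn:ℝ) ≤ ((cn:ℝ)/an) * N := by
        have he : (cn:ℝ)/(an:ℝ)*(an:ℝ) = (cn:ℝ) := div_mul_cancel₀ _ (ne_of_gt hanpos)
        calc (cn:ℝ) = ((cn:ℝ)/an)*an := he.symm
          _ ≤ ((cn:ℝ)/an)*N := mul_le_mul_of_nonneg_left hanN.le hδnn.2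
      rcases hcase with h | ⟨h, h2⟩
      · have hcast : (N:ℝ) ≤ (w1:ℝ) + w2 + (2*(am:ℝ) + cm + cn + ((m:ℝ)+2)) := by
          exact_mod_cast h
        have p1 : 2*(am:ℝ) ≤ (2/((m:ℝ)+1))*N := by
          rw [div_mul_eq_mul_div, le_div_iff₀ hm1]
          linarith only [hamanR, hanN, ham1R, hampos]
        have p4 : ((m:ℝ)+2) ≤ (2/((m:ℝ)+1))*N := by
          rw [div_mul_eq_mul_div, le_div_iff₀ hm1]
          have hsq1 : ((m:ℝ)+1)*((m:ℝ)+1) ≤ (am:ℝ)*((m:ℝ)+1) :=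
            mul_le_mul_of_nonneg_right ham1R (by linarith only [])
          linarith only [hsq1, hamanR, hanN, ham1R, han1R]
        rw [hJrdef, hQQdef]
        have expand : (4/((m:ℝ)+1) + (cm:ℝ)/am + (cn:ℝ)/an) * N
            = (2/((m:ℝ)+1))*N + (2/((m:ℝ)+1))*N + ((cm:ℝ)/am)*N + ((cn:ℝ)/an)*N := by
          ring
        rw [expand]
        linarith
      · have hcast : (N:ℝ) ≤ (w1:ℝ) + w2 + (2*(am:ℝ) + cm + cn + (an:ℝ)) := by
          exact_mod_cast h
        have h2R : (an:ℝ)*(an:ℝ) ≤ N := by exact_mod_cast h2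
        have p1 : 2*(am:ℝ) ≤ (2/((m:ℝ)+1))*N := by
          rw [div_mul_eq_mul_div, le_div_iff₀ hm1]
          linarith only [hamanR, hanN, ham1R, hampos]
        have p4 : (an:ℝ) ≤ (2/((m:ℝ)+1))*N := by
          rw [div_mul_eq_mul_div, le_div_iff₀ hm1]
          have hsq1 : (an:ℝ)*((m:ℝ)+1) ≤ (an:ℝ)*(an:ℝ) :=
            mul_le_mul_of_nonneg_left (by linarith only [han1R]) (by linarith only [hanpos])
          linarith only [hsq1, h2R]
        rw [hJrdef, hQQdef]
        have expand : (4/((m:ℝ)+1) + (cm:ℝ)/am + (cn:ℝ)/an) * N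
            = (2/((m:ℝ)+1))*N + (2/((m:ℝ)+1))*N + ((cm:ℝ)/am)*N + ((cn:ℝ)/an)*N := by
          ring
        rw [expand]
        linarith
    -- E bounds
    set E1 : ℝ := Sy1/((m:ℝ)+1) with hE1def
    set E2 : ℝ := Sy2/((m:ℝ)+2) with hE2def
    have hSy1b : |Sy1| ≤ ((m:ℝ)+1)*G := by
      rw [hSy1def]
      calc |∑ i ∈ Finset.range (m+1), g (shift^[i] y)|
          ≤ ∑ i ∈ Finset.range (m+1), |g (shift^[i] y)| := Finset.abs_sum_le_sum_abs _ _
        _ ≤ (Finset.range (m+1)).card • G := Finset.sum_le_card_nsmul _ _ _ (fun i _ => hGb _)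
        _ = ((m:ℝ)+1)*G := by rw [Finset.card_range, nsmul_eq_mul]; push_cast; ring
    have hSy2b : |Sy2| ≤ ((m:ℝ)+2)*G := by
      rw [hSy2def]
      calc |∑ i ∈ Finset.range (m+2), g (shift^[i] y)|
          ≤ ∑ i ∈ Finset.range (m+2), |g (shift^[i] y)| := Finset.abs_sum_le_sum_abs _ _
        _ ≤ (Finset.range (m+2)).card • G := Finset.sum_le_card_nsmul _ _ _ (fun i _ => hGb _)
        _ = ((m:ℝ)+2)*G := by rw [Finset.card_range, nsmul_eq_mul]; push_cast; ring
    have hE2b : |E2| ≤ G := by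
      rw [hE2def, abs_div, abs_of_pos hm2, div_le_iff₀ hm2]
      linarith only [hSy2b]
    have hE12 : |E1 - E2| ≤ 2*G/((m:ℝ)+2) := by
      have hsucc : Sy2 = Sy1 + g (shift^[m+1] y) := by
        rw [hSy1def, hSy2def, Finset.sum_range_succ]
      have hid : E1 - E2 = (Sy1 - ((m:ℝ)+1) * g (shift^[m+1] y)) / (((m:ℝ)+1)*((m:ℝ)+2)) := by
        rw [hE1def, hE2def, hsucc]
        field_simp
        ring
      rw [hid, abs_div, abs_of_pos (by positivity : (0:ℝ) < ((m:ℝ)+1)*((m:ℝ)+2))]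
      rw [div_le_div_iff₀ (by positivity) hm2]
      have hnum : |Sy1 - ((m:ℝ)+1) * g (shift^[m+1] y)| ≤ 2*((m:ℝ)+1)*G := by
        have h1 : |((m:ℝ)+1) * g (shift^[m+1] y)| ≤ ((m:ℝ)+1)*G := by
          rw [abs_mul, abs_of_pos hm1]
          exact mul_le_mul_of_nonneg_left (hGb _) (by linarith only [])
        calc |Sy1 - ((m:ℝ)+1) * g (shift^[m+1] y)|
            ≤ |Sy1| + |((m:ℝ)+1) * g (shift^[m+1] y)| := abs_sub _ _
          _ ≤ 2*((m:ℝ)+1)*G := by linarith only [h1, hSy1b]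
      calc |Sy1 - ((m:ℝ)+1) * g (shift^[m+1] y)| * ((m:ℝ)+2)
          ≤ (2*((m:ℝ)+1)*G) * ((m:ℝ)+2) := mul_le_mul_of_nonneg_right hnum (by linarith only [])
        _ = 2*G*(((m:ℝ)+1)*((m:ℝ)+2)) := by ring
    -- decomposition identity
    set u : ℝ := (w1:ℝ)/N with hudef
    set v : ℝ := (w2:ℝ)/N with hvdef
    have hu0 : 0 ≤ u := by
      rw [hudef]; exact div_nonneg (Nat.cast_nonneg _) hNpos.le
    have hv0 : 0 ≤ v := by
      rw [hvdef]; exact div_nonneg (Nat.cast_nonneg _) hNpos.le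
    have hu1 : u ≤ 1 := by
      rw [hudef, div_le_one hNpos]
      exact hw1N.1
    have huv1 : u + v ≤ 1 := by
      rw [hudef, hvdef, ← add_div, div_le_one hNpos]
      exact hw1N.2.2
    have hJruv : Jr = (1 - u - v) * N := by
      rw [hJrdef, hudef, hvdef]
      field_simp
    have hdecomp : ST/(N:ℝ) - E2
        = (R + (T1 - (am:ℝ)^2 * Sy1) + (T2 - (q:ℝ) * Sy2))/N
          + u*(E1 - E2) + (u + v - 1)*E2 := by
      rw [hsplit, hE1def, hE2def, hudef, hvdef, hw1cast, hw2cast]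
      field_simp
      ring
    -- final assembly
    have habs3 : |R + (T1 - (am:ℝ)^2 * Sy1) + (T2 - (q:ℝ) * Sy2)|
        ≤ |R| + |T1 - (am:ℝ)^2 * Sy1| + |T2 - (q:ℝ) * Sy2| := by
      calc |R + (T1 - (am:ℝ)^2 * Sy1) + (T2 - (q:ℝ) * Sy2)|
          ≤ |R + (T1 - (am:ℝ)^2 * Sy1)| + |T2 - (q:ℝ) * Sy2| := abs_add_le _ _
        _ ≤ |R| + |T1 - (am:ℝ)^2 * Sy1| + |T2 - (q:ℝ) * Sy2| := by
            have := abs_add_le R (T1 - (am:ℝ)^2 * Sy1)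
            linarith
    set K : ℝ := 2*G*((L:ℝ)+1) with hKdef
    have hK0 : 0 ≤ K := by rw [hKdef]; positivity
    have hD1 : ((am:ℝ)^2)*(((m:ℝ)+1)*ε' + K) ≤ (N:ℝ)*(ε' + K/((m:ℝ)+1)) := by
      have h1 : (am:ℝ)^2 * ((m:ℝ)+1) ≤ N := by rw [← hw1cast]; exact hw1N.1
      have h2 : (0:ℝ) ≤ (am:ℝ)^2 := by positivity
      have h3 : (am:ℝ)^2 * K ≤ (N:ℝ) * (K/((m:ℝ)+1)) := by
        rw [mul_div_assoc', le_div_iff₀ hm1]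
        calc (am:ℝ)^2*K*((m:ℝ)+1) = ((am:ℝ)^2*((m:ℝ)+1))*K := by ring
          _ ≤ (N:ℝ)*K := mul_le_mul_of_nonneg_right h1 hK0
      have h4 : (am:ℝ)^2*((m:ℝ)+1)*ε' ≤ (N:ℝ)*ε' := mul_le_mul_of_nonneg_right h1 hε'0
      calc ((am:ℝ)^2)*(((m:ℝ)+1)*ε' + K) = (am:ℝ)^2*((m:ℝ)+1)*ε' + (am:ℝ)^2*K := by ring
        _ ≤ (N:ℝ)*ε' + (N:ℝ)*(K/((m:ℝ)+1)) := by linarith only [h3, h4]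
        _ = (N:ℝ)*(ε' + K/((m:ℝ)+1)) := by ring
    have hD2 : (q:ℝ)*(((m:ℝ)+2)*ε' + K) ≤ (N:ℝ)*(ε' + K/((m:ℝ)+1)) := by
      have h1 : (q:ℝ) * ((m:ℝ)+2) ≤ N := by
        rw [← hw2cast]
        linarith only [hw1N.2.2, Nat.cast_nonneg (α := ℝ) w1]
      have hq0 : (0:ℝ) ≤ (q:ℝ) := by positivity
      have h3 : (q:ℝ) * K ≤ (N:ℝ) * (K/((m:ℝ)+1)) := by
        rw [mul_div_assoc', le_div_iff₀ hm1]
        have h5 : (q:ℝ)*((m:ℝ)+1) ≤ (q:ℝ)*((m:ℝ)+2) := by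
          apply mul_le_mul_of_nonneg_left (by linarith only []) hq0
        calc (q:ℝ)*K*((m:ℝ)+1) = ((q:ℝ)*((m:ℝ)+1))*K := by ring
          _ ≤ ((q:ℝ)*((m:ℝ)+2))*K := mul_le_mul_of_nonneg_right h5 hK0
          _ ≤ (N:ℝ)*K := mul_le_mul_of_nonneg_right h1 hK0
      have h4 : (q:ℝ)*((m:ℝ)+2)*ε' ≤ (N:ℝ)*ε' := mul_le_mul_of_nonneg_right h1 hε'0
      calc (q:ℝ)*(((m:ℝ)+2)*ε' + K) = (q:ℝ)*((m:ℝ)+2)*ε' + (q:ℝ)*K := by ring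
        _ ≤ (N:ℝ)*ε' + (N:ℝ)*(K/((m:ℝ)+1)) := by linarith only [h3, h4]
        _ = (N:ℝ)*(ε' + K/((m:ℝ)+1)) := by ring
    have hnum : |R + (T1 - (am:ℝ)^2 * Sy1) + (T2 - (q:ℝ) * Sy2)|
        ≤ Jr*G + 2*((N:ℝ)*(ε' + K/((m:ℝ)+1))) := by
      have hRb' : |R| ≤ Jr * G := by
        rw [hJrdef]
        calc |R| ≤ ((N:ℝ) - w1 - w2) * G := hRb
          _ = ((N:ℝ) - ↑w1 - ↑w2) * G := by ring
      calc |R + (T1 - (am:ℝ)^2 * Sy1) + (T2 - (q:ℝ) * Sy2)|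
          ≤ |R| + |T1 - (am:ℝ)^2 * Sy1| + |T2 - (q:ℝ) * Sy2| := habs3
        _ ≤ Jr*G + ((am:ℝ)^2)*(((m:ℝ)+1)*ε' + K) + (q:ℝ)*(((m:ℝ)+2)*ε' + K) :=
            add_le_add (add_le_add hRb' hcs1) hcs2
        _ ≤ Jr*G + (N:ℝ)*(ε' + K/((m:ℝ)+1)) + (N:ℝ)*(ε' + K/((m:ℝ)+1)) :=
            add_le_add (add_le_add le_rfl hD1) hD2
        _ = Jr*G + 2*((N:ℝ)*(ε' + K/((m:ℝ)+1))) := by ring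
    set ρ : ℝ := Jr/(N:ℝ) with hρdef
    have hρ0 : 0 ≤ ρ := by
      rw [hρdef]; exact div_nonneg hJr0 hNpos.le
    have hρQ : ρ ≤ QQ := by
      rw [hρdef, div_le_iff₀ hNpos]
      exact hJrQ
    have hρuv : ρ = 1 - u - v := by
      rw [hρdef, hJruv]
      field_simp
    have hnumdiv : |R + (T1 - (am:ℝ)^2 * Sy1) + (T2 - (q:ℝ) * Sy2)|/(N:ℝ)
        ≤ ρ*G + 2*(ε' + K/((m:ℝ)+1)) := by
      have h1 : (Jr*G + 2*((N:ℝ)*(ε' + K/((m:ℝ)+1))))/(N:ℝ)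
          = ρ*G + 2*(ε' + K/((m:ℝ)+1)) := by
        rw [hρdef]
        field_simp
      rw [← h1]
      exact (div_le_div_iff_of_pos_right hNpos).2 hnum
    have hfinal : |ST/(N:ℝ) - E2| ≤ ρ*G + 2*(ε' + K/((m:ℝ)+1)) + 2*G/((m:ℝ)+1) + ρ*G := by
      rw [hdecomp]
      have t1 : |(R + (T1 - (am:ℝ)^2 * Sy1) + (T2 - (q:ℝ) * Sy2))/(N:ℝ)|
          = |R + (T1 - (am:ℝ)^2 * Sy1) + (T2 - (q:ℝ) * Sy2)|/(N:ℝ) := by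
        rw [abs_div, abs_of_pos hNpos]
      have t2 : |u*(E1 - E2)| ≤ 2*G/((m:ℝ)+1) := by
        rw [abs_mul, abs_of_nonneg hu0]
        have h22 : 2*G/((m:ℝ)+2) ≤ 2*G/((m:ℝ)+1) :=
          div_le_div_of_nonneg_left (by linarith) hm1 (by linarith)
        calc u * |E1 - E2| ≤ 1 * (2*G/((m:ℝ)+2)) := by
              apply mul_le_mul hu1 hE12 (abs_nonneg _) zero_le_one
          _ ≤ 2*G/((m:ℝ)+1) := by linarith
      have t3 : |(u + v - 1)*E2| ≤ ρ*G := by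
        rw [abs_mul]
        have : |u + v - 1| = ρ := by
          rw [abs_of_nonpos (by linarith), hρuv]; ring
        rw [this]
        apply mul_le_mul_of_nonneg_left hE2b hρ0
      calc |(R + (T1 - (am:ℝ)^2 * Sy1) + (T2 - (q:ℝ) * Sy2))/(N:ℝ)
            + u*(E1 - E2) + (u + v - 1)*E2|
          ≤ |(R + (T1 - (am:ℝ)^2 * Sy1) + (T2 - (q:ℝ) * Sy2))/(N:ℝ)
            + u*(E1 - E2)| + |(u + v - 1)*E2| := abs_add_le _ _
        _ ≤ |(R + (T1 - (am:ℝ)^2 * Sy1) + (T2 - (q:ℝ) * Sy2))/(N:ℝ)|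
            + |u*(E1 - E2)| + |(u + v - 1)*E2| := by
              have := abs_add_le ((R + (T1 - (am:ℝ)^2 * Sy1) + (T2 - (q:ℝ) * Sy2))/(N:ℝ))
                (u*(E1 - E2))
              linarith only [this]
        _ ≤ ρ*G + 2*(ε' + K/((m:ℝ)+1)) + 2*G/((m:ℝ)+1) + ρ*G := by
              rw [t1]
              exact add_le_add (add_le_add hnumdiv t2) t3
    -- numeric conclusion
    have hQG : ρ*G ≤ ε/8 := by
      have h1 : ρ*G ≤ QQ*G := mul_le_mul_of_nonneg_right hρQ hG0
      have h2 : QQ*G = 4*G/((m:ℝ)+1) + ((cm:ℝ)/am)*G + ((cn:ℝ)/an)*G := by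
        rw [hQQdef]; ring
      have h3 : 4*G/((m:ℝ)+1) ≤ ε/16 := by
        have he : 4*G/((m:ℝ)+1) = (8*G/((m:ℝ)+1))/2 := by ring
        rw [he]; linarith only [h5]
      have h4' : ((cm:ℝ)/am)*G ≤ ε/32 := by
        have := mul_le_mul_of_nonneg_right hδm' hG0
        have he : (ε/(32*G))*G = ε/32 := by
          field_simp
        linarith only [this, he]
      have h5' : ((cn:ℝ)/an)*G ≤ ε/32 := by
        have := mul_le_mul_of_nonneg_right hδm1' hG0
        have he : (ε/(32*G))*G = ε/32 := by
          field_simp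
        linarith only [this, he]
      calc ρ*G ≤ QQ*G := h1
        _ = 4*G/((m:ℝ)+1) + ((cm:ℝ)/am)*G + ((cn:ℝ)/an)*G := h2
        _ ≤ ε/16 + ε/32 + ε/32 := by linarith only [h3, h4', h5']
        _ = ε/8 := by ring
    have hKm : 2*(K/((m:ℝ)+1)) = 4*G*((L:ℝ)+1)/((m:ℝ)+1) := by
      rw [hKdef]; ring
    have h2G : 2*G/((m:ℝ)+1) ≤ ε/16 := h4
    have hε'2 : 2*ε' = ε/2 := by rw [hε'def]; ring
    calc |ST/(N:ℝ) - E2|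
        ≤ ρ*G + 2*(ε' + K/((m:ℝ)+1)) + 2*G/((m:ℝ)+1) + ρ*G := hfinal
      _ = 2*(ρ*G) + 2*ε' + 2*(K/((m:ℝ)+1)) + 2*G/((m:ℝ)+1) := by ring
      _ ≤ 2*(ε/8) + ε/2 + ε/8 + ε/16 := by
          have hKm' : 2*(K/((m:ℝ)+1)) ≤ ε/8 := by rw [hKm]; exact h3
          linarith only [hQG, hKm', h2G, hε'2]
      _ ≤ ε := by linarith only [hε.le]
  -- convert from m to n = m+1
  rw [eventually_atTop] at main ⊢
  obtain ⟨M, hM⟩ := main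
  refine ⟨M + 1, fun n hn => ?_⟩
  have hn1 : 1 ≤ n := by omega
  intro N h1 h2
  have := hM (n-1) (by omega)
  rw [Nat.sub_add_cancel hn1] at this
  have h2' : N ≤ aa D y (n - 1 + 2) := by
    rw [show n - 1 + 2 = n + 1 by omega]; exact h2
  have htt := this N h1 h2'
  rw [show n - 1 + 2 = n + 1 from by omega] at htt
  have hc : ((n - 1 : ℕ):ℝ) + 2 = (n:ℝ) + 1 := by
    rw [Nat.cast_sub hn1]; push_cast; ring
  rw [hc] at htt
  exact htt

end TPE3

namespace TPE5
open TPE TPE2 TPE3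

lemma dir1 {k : ℕ} {P : Set (ℕ → Fin k)} (D : TData k P) (y : ℕ → Fin k)
    (hD' : Filter.Tendsto (fun n => ((D.C n).length : ℝ) / ((D.A y n).length))
      Filter.atTop (nhds 0)) :
    VSet y ⊆ VSet (D.T y) := by
  rintro μ ⟨hprob, φ, hφ, hg⟩
  have hφ2 : StrictMono (fun j => φ (j + 2)) :=
    hφ.comp (fun a b h => by omega)
  refine ⟨hprob, fun j => aa D y (φ (j+2)), (aa_mono D y).comp hφ2, ?_⟩
  intro gc
  have h1 : Filter.Tendsto (fun j => (∑ i ∈ Finset.range (φ (j+2)), gc (shift^[i] y))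
      / ((φ (j+2) : ℕ) : ℝ)) atTop (nhds (∫ z, gc z ∂μ)) :=
    (hg gc).comp (tendsto_add_atTop_nat 2)
  have hdiff : Filter.Tendsto (fun j =>
      (∑ i ∈ Finset.range (aa D y (φ (j+2))), gc (shift^[i] (D.T y)))
        / ((aa D y (φ (j+2)) : ℕ) : ℝ)
      - (∑ i ∈ Finset.range (φ (j+2)), gc (shift^[i] y)) / ((φ (j+2) : ℕ) : ℝ))
      atTop (nhds 0) := by
    rw [NormedAddCommGroup.tendsto_nhds_zero]
    intro ε hε
    obtain ⟨n₀, hn₀⟩ := eventually_atTop.1 (mainEst D y hD' gc (half_pos hε))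
    rw [eventually_atTop]
    refine ⟨n₀, fun j hj => ?_⟩
    have hφj : n₀ + 1 ≤ φ (j+2) := by
      have h0 : j + 2 ≤ φ (j+2) := hφ.le_apply
      omega
    set n := φ (j + 2) - 1 with hndef
    have hn1 : n + 1 = φ (j+2) := by omega
    have hnn0 : n₀ ≤ n := by omega
    have hlt : aa D y n < aa D y (φ (j+2)) := aa_mono D y (by omega)
    have hle : aa D y (φ (j+2)) ≤ aa D y (n+1) := by rw [hn1]
    have := hn₀ n hnn0 (aa D y (φ (j+2))) hlt hle
    rw [hn1] at this
    have hc : ((n:ℝ)+1) = ((φ (j+2) : ℕ) : ℝ) := by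
      rw [hndef]
      have : (1:ℕ) ≤ φ (j+2) := by omega
      push_cast [Nat.cast_sub this]
      ring
    rw [hc] at this
    rw [Real.norm_eq_abs]
    calc |_| ≤ ε/2 := this
      _ < ε := by linarith
  have heq : (fun j => (∑ i ∈ Finset.range (aa D y (φ (j+2))), gc (shift^[i] (D.T y)))
      / ((aa D y (φ (j+2)) : ℕ) : ℝ))
      = fun j => ((∑ i ∈ Finset.range (aa D y (φ (j+2))), gc (shift^[i] (D.T y)))
        / ((aa D y (φ (j+2)) : ℕ) : ℝ)
      - (∑ i ∈ Finset.range (φ (j+2)), gc (shift^[i] y)) / ((φ (j+2) : ℕ) : ℝ))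
      + ((∑ i ∈ Finset.range (φ (j+2)), gc (shift^[i] y)) / ((φ (j+2) : ℕ) : ℝ)) := by
    funext j
    ring
  show Filter.Tendsto (fun j => (∑ i ∈ Finset.range (aa D y (φ (j+2))),
      gc (shift^[i] (D.T y))) / ((aa D y (φ (j+2)) : ℕ) : ℝ)) atTop _
  rw [heq]
  simpa using hdiff.add h1

lemma dir2 {k : ℕ} {P : Set (ℕ → Fin k)} (D : TData k P) (y : ℕ → Fin k)
    (hD' : Filter.Tendsto (fun n => ((D.C n).length : ℝ) / ((D.A y n).length))
      Filter.atTop (nhds 0)) :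
    VSet (D.T y) ⊆ VSet y := by
  classical
  rintro μ ⟨hprob, φ, hφ, hg⟩
  set ν : ℕ → ℕ := fun j => Nat.findGreatest (fun i => aa D y i < φ j) (φ j) + 1 with hνdef
  have hspec : ∀ j, aa D y 1 < φ j →
      (aa D y (ν j - 1) < φ j ∧ 1 ≤ ν j - 1 ∧ φ j ≤ aa D y (ν j)) := by
    intro j h1
    have h1' : 1 ≤ φ j := by
      have := aa_ge D y 1
      omega
    set n := Nat.findGreatest (fun i => aa D y i < φ j) (φ j) with hndef
    have hν : ν j = n + 1 := rfl
    have hsp : aa D y n < φ j :=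
      Nat.findGreatest_spec (P := fun i => aa D y i < φ j) h1' h1
    have hge : 1 ≤ n := Nat.le_findGreatest (P := fun i => aa D y i < φ j) h1' h1
    have hub : φ j ≤ aa D y (n+1) := by
      by_contra hcon
      push_neg at hcon
      have hle : n + 1 ≤ φ j := by
        have := aa_ge D y n
        omega
      exact Nat.findGreatest_is_greatest (P := fun i => aa D y i < φ j)
        (Nat.lt_succ_self n) hle hcon
    rw [hν]
    simpa using ⟨hsp, hge, hub⟩
  have hνt : Filter.Tendsto ν atTop atTop := by
    rw [tendsto_atTop_atTop]
    intro K
    refine ⟨aa D y K + 1, fun j hj => ?_⟩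
    have hφj : aa D y K < φ j := by
      have h0 : j ≤ φ j := hφ.le_apply
      omega
    have hK : K ≤ φ j := by
      have := aa_ge D y K
      omega
    have h2 : K ≤ Nat.findGreatest (fun i => aa D y i < φ j) (φ j) :=
      Nat.le_findGreatest (P := fun i => aa D y i < φ j) hK hφj
    show K ≤ Nat.findGreatest (fun i => aa D y i < φ j) (φ j) + 1
    omega
  obtain ⟨ψ, hψ, hνψ⟩ := strictMono_subseq_of_tendsto_atTop hνt
  refine ⟨hprob, ν ∘ ψ, hνψ, ?_⟩
  intro gc
  have h1 : Filter.Tendsto (fun j =>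
      (∑ i ∈ Finset.range (φ (ψ j)), gc (shift^[i] (D.T y))) / ((φ (ψ j) : ℕ) : ℝ))
      atTop (nhds (∫ z, gc z ∂μ)) :=
    (hg gc).comp hψ.tendsto_atTop
  have hdiff : Filter.Tendsto (fun j =>
      (∑ i ∈ Finset.range (ν (ψ j)), gc (shift^[i] y)) / ((ν (ψ j) : ℕ) : ℝ)
      - (∑ i ∈ Finset.range (φ (ψ j)), gc (shift^[i] (D.T y))) / ((φ (ψ j) : ℕ) : ℝ))
      atTop (nhds 0) := by
    rw [NormedAddCommGroup.tendsto_nhds_zero]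
    intro ε hε
    obtain ⟨n₀, hn₀⟩ := eventually_atTop.1 (mainEst D y hD' gc (half_pos hε))
    have hbig : ∀ᶠ j in atTop, n₀ + 1 ≤ ν (ψ j) :=
      (hνt.comp hψ.tendsto_atTop).eventually_ge_atTop (n₀ + 1)
    have hbig2 : ∀ᶠ j in atTop, aa D y 1 < φ (ψ j) := by
      rw [eventually_atTop]
      refine ⟨aa D y 1 + 1, fun j hj => ?_⟩
      have h1 : ψ j ≤ φ (ψ j) := hφ.le_apply
      have h2 : j ≤ ψ j := hψ.le_apply
      omega
    filter_upwards [hbig, hbig2] with j hb hb2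
    obtain ⟨hs1, hs2, hs3⟩ := hspec (ψ j) hb2
    set n := ν (ψ j) - 1 with hndef
    have hn1 : n + 1 = ν (ψ j) := by omega
    have := hn₀ n (by omega) (φ (ψ j)) hs1 (by rw [hn1]; exact hs3)
    rw [hn1] at this
    have hc : ((n:ℝ)+1) = ((ν (ψ j) : ℕ) : ℝ) := by
      rw [← hn1]
      push_cast
      ring
    rw [hc] at this
    rw [Real.norm_eq_abs, abs_sub_comm]
    calc |_| ≤ ε/2 := this
      _ < ε := by linarith
  have heq : (fun j => (∑ i ∈ Finset.range (ν (ψ j)), gc (shift^[i] y))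
      / ((ν (ψ j) : ℕ) : ℝ))
      = fun j => ((∑ i ∈ Finset.range (ν (ψ j)), gc (shift^[i] y)) / ((ν (ψ j) : ℕ) : ℝ)
      - (∑ i ∈ Finset.range (φ (ψ j)), gc (shift^[i] (D.T y))) / ((φ (ψ j) : ℕ) : ℝ))
      + ((∑ i ∈ Finset.range (φ (ψ j)), gc (shift^[i] (D.T y))) / ((φ (ψ j) : ℕ) : ℝ)) := by
    funext j
    ring
  show Filter.Tendsto (fun j => (∑ i ∈ Finset.range (ν (ψ j)), gc (shift^[i] y))
      / ((ν (ψ j) : ℕ) : ℝ)) atTop _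
  rw [heq]
  simpa using hdiff.add h1

end TPE5

/-- **Proposition.** For a proper subshift `P ⊊ Σ_k` and the map `T` constructed from `P`,
the set of weak* limit points of the empirical measures of `T(y)` coincides with that
of `y`: `V(T(y), σ) = V(y, σ)` for every `y ∈ P`. -/
theorem T_preserves_empirical_limit_points (k : ℕ) (hk : 2 ≤ k)
    (P : Set (ℕ → Fin k)) (hP : IsSubshift P) (hproper : P ≠ Set.univ)
    (D : TData k P) (hD : D.Small) (y : ℕ → Fin k) (hy : y ∈ P) :
    VSet (D.T y) = VSet y :=
  Set.Subset.antisymm (TPE5.dir2 D y (hD y)) (TPE5.dir1 D y (hD y))
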